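/- If s > log|λ₂|/τ, then the Hausdorff s-measure of R_τ is zero; consequently dim_H R_τ ≤ log|λ₂|/τ. -/

import Mathlib

open Filter MeasureTheory

noncomputable def intVec (z : Fin 2 → ℤ) : EuclideanSpace ℝ (Fin 2) :=
  (WithLp.equiv 2 (Fin 2 → ℝ)).symm fun i => (z i : ℝ)

/-- The lift to `ℝ²` of the recurrence set
`R_τ = {x ∈ 𝕋² : Tⁿx ∈ B(x, e^{-nτ}) for infinitely many n}`, where
`T x = A x (mod 1)`:  `Tⁿx ∈ B(x, e^{-nτ})` iff `‖Aⁿx - x - z‖ < e^{-nτ}`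
for some `z ∈ ℤ²`. -/
noncomputable def recSet (A : Matrix (Fin 2) (Fin 2) ℤ) (τ : ℝ) :
    Set (EuclideanSpace ℝ (Fin 2)) :=
  {x | ∃ᶠ n : ℕ in atTop, ∃ z : Fin 2 → ℤ,
    ‖Matrix.toEuclideanLin ((A ^ n).map (Int.cast : ℤ → ℝ)) x - x - intVec z‖
      < Real.exp (-(n : ℝ) * τ)}

namespace RecAux

open Metric


abbrev E2 := EuclideanSpace ℝ (Fin 2)

lemma coord_le_norm (y : E2) (i : Fin 2) : |y i| ≤ ‖y‖ := by
  rw [EuclideanSpace.norm_eq]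
  rw [← Real.sqrt_sq_eq_abs]
  apply Real.sqrt_le_sqrt
  rw [Fin.sum_univ_two]
  fin_cases i <;> simp [Real.norm_eq_abs, sq_abs] <;> nlinarith [sq_nonneg (y 0), sq_nonneg (y 1)]

lemma norm_le_coords (y : E2) : ‖y‖ ≤ |y 0| + |y 1| := by
  rw [EuclideanSpace.norm_eq, Fin.sum_univ_two]
  rw [show ‖y 0‖ ^ 2 + ‖y 1‖ ^ 2 = (y 0)^2 + (y 1)^2 by simp [Real.norm_eq_abs, sq_abs]]
  have h : (y 0)^2 + (y 1)^2 ≤ (|y 0| + |y 1|)^2 := by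
    have := abs_nonneg (y 0); have := abs_nonneg (y 1)
    nlinarith [sq_abs (y 0), sq_abs (y 1)]
  calc Real.sqrt ((y 0)^2 + (y 1)^2) ≤ Real.sqrt ((|y 0| + |y 1|)^2) := Real.sqrt_le_sqrt h
    _ = |y 0| + |y 1| := Real.sqrt_sq (by positivity)

lemma toEuc_coord (P : Matrix (Fin 2) (Fin 2) ℝ) (x : E2) (i : Fin 2) :
    (Matrix.toEuclideanLin P x) i = P i 0 * x 0 + P i 1 * x 1 := by
  fin_cases i <;> simp [Matrix.toEuclideanLin_apply, Matrix.mulVec, dotProduct, Fin.sum_univ_two]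

lemma norm_toEuc_le {P : Matrix (Fin 2) (Fin 2) ℝ} {c : ℝ} (hc : ∀ i j, |P i j| ≤ c)
    (x : E2) : ‖Matrix.toEuclideanLin P x‖ ≤ 4 * c * ‖x‖ := by
  have hb : ∀ i : Fin 2, |(Matrix.toEuclideanLin P x) i| ≤ 2 * c * ‖x‖ := by
    intro i
    rw [toEuc_coord]
    have h0 : |x 0| ≤ ‖x‖ := coord_le_norm x 0
    have h1 : |x 1| ≤ ‖x‖ := coord_le_norm x 1
    have e0 : |P i 0 * x 0| ≤ c * ‖x‖ := by
      rw [abs_mul]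
      exact mul_le_mul (hc i 0) h0 (abs_nonneg _) ((abs_nonneg _).trans (hc i 0))
    have e1 : |P i 1 * x 1| ≤ c * ‖x‖ := by
      rw [abs_mul]
      exact mul_le_mul (hc i 1) h1 (abs_nonneg _) ((abs_nonneg _).trans (hc i 1))
    calc |P i 0 * x 0 + P i 1 * x 1| ≤ |P i 0 * x 0| + |P i 1 * x 1| := abs_add_le _ _
      _ ≤ c * ‖x‖ + c * ‖x‖ := add_le_add e0 e1
      _ = 2 * c * ‖x‖ := by ring
  calc ‖Matrix.toEuclideanLin P x‖ ≤ |(Matrix.toEuclideanLin P x) 0| + |(Matrix.toEuclideanLin P x) 1| :=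
        norm_le_coords _
    _ ≤ 2 * c * ‖x‖ + 2 * c * ‖x‖ := add_le_add (hb 0) (hb 1)
    _ = 4 * c * ‖x‖ := by ring

lemma toEuc_mul (P Q : Matrix (Fin 2) (Fin 2) ℝ) (x : E2) :
    Matrix.toEuclideanLin (P * Q) x = Matrix.toEuclideanLin P (Matrix.toEuclideanLin Q x) := by
  simp [Matrix.toEuclideanLin_apply, Matrix.mulVec_mulVec, Equiv.apply_symm_apply]

lemma toEuc_one (x : E2) : Matrix.toEuclideanLin (1 : Matrix (Fin 2) (Fin 2) ℝ) x = x := by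
  simp [Matrix.toEuclideanLin_apply, Matrix.one_mulVec]

lemma toEuc_sub_one (P : Matrix (Fin 2) (Fin 2) ℝ) (x : E2) :
    Matrix.toEuclideanLin (P - 1) x = Matrix.toEuclideanLin P x - x := by
  rw [map_sub, LinearMap.sub_apply, toEuc_one]

lemma det_toEuc (P : Matrix (Fin 2) (Fin 2) ℝ) :
    LinearMap.det (Matrix.toEuclideanLin P) = P.det := by
  rw [Matrix.toEuclideanLin_eq_toLin, LinearMap.det_toLin]

lemma intVec_apply (z : Fin 2 → ℤ) (i : Fin 2) : intVec z i = (z i : ℝ) := rfl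

lemma intVec_dist {z z' : Fin 2 → ℤ} (h : z ≠ z') : (1:ℝ) ≤ dist (intVec z) (intVec z') := by
  obtain ⟨i, hi⟩ := Function.ne_iff.mp h
  have h1 : (1:ℝ) ≤ |(z i : ℝ) - (z' i : ℝ)| := by
    rw [← Int.cast_sub, ← Int.cast_abs]
    exact_mod_cast Int.one_le_abs (sub_ne_zero.mpr hi)
  have h2 : |(intVec z - intVec z') i| ≤ ‖intVec z - intVec z'‖ := coord_le_norm _ i
  have h3 : (intVec z - intVec z') i = (z i : ℝ) - (z' i : ℝ) := rfl
  rw [dist_eq_norm]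
  rw [h3] at h2
  linarith

lemma cayley (M : Matrix (Fin 2) (Fin 2) ℝ) :
    M * M = M.trace • M - M.det • (1 : Matrix (Fin 2) (Fin 2) ℝ) := by
  ext i j
  fin_cases i <;> fin_cases j <;>
    simp [Matrix.mul_apply, Fin.sum_univ_two, Matrix.trace_fin_two, Matrix.det_fin_two,
      Matrix.one_apply] <;> ring

lemma det_smul_add_smul_one (M : Matrix (Fin 2) (Fin 2) ℝ) (x y : ℝ) :
    (x • M + y • (1 : Matrix (Fin 2) (Fin 2) ℝ)).det
      = x^2 * M.det + x * y * M.trace + y^2 := by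
  simp [Matrix.det_fin_two, Matrix.trace_fin_two, Matrix.one_apply]
  ring

lemma pow_formula (M : Matrix (Fin 2) (Fin 2) ℝ) (a b : ℝ) (hab : b - a ≠ 0)
    (htr : M.trace = a + b) (hdet : M.det = a * b) (n : ℕ) :
    M ^ n = ((b^n - a^n)/(b-a)) • M + ((b*a^n - a*b^n)/(b-a)) • (1 : Matrix (Fin 2) (Fin 2) ℝ) := by
  induction n with
  | zero =>
      simp [div_self hab]
  | succ n ih =>
      have hMM : M * M = (a+b) • M - (a*b) • (1 : Matrix (Fin 2) (Fin 2) ℝ) := by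
        rw [cayley, htr, hdet]
      have hp : (b^(n+1) - a^(n+1))/(b-a)
          = ((b^n - a^n)/(b-a)) * (a+b) + (b*a^n - a*b^n)/(b-a) := by
        field_simp; ring
      have hq : (b*a^(n+1) - a*b^(n+1))/(b-a) = -(((b^n - a^n)/(b-a)) * (a*b)) := by
        field_simp; ring
      rw [pow_succ, ih, hp, hq, add_mul, Matrix.smul_mul, Matrix.smul_mul, Matrix.one_mul, hMM]
      rw [smul_sub, smul_smul, smul_smul, add_smul]
      module

lemma abs_sub_le' (a b : ℝ) : |a - b| ≤ |a| + |b| := by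
  rw [sub_eq_add_neg, ← abs_neg b]; exact abs_add_le _ _
lemma ediam_closedBall_le {c : E2} {ρ D : ℝ} (hρ : 0 ≤ ρ) (hD : 2*ρ ≤ D) :
    EMetric.diam (Metric.closedBall c ρ) ≤ ENNReal.ofReal D := by
  refine EMetric.diam_le fun x hx y hy => ?_
  rw [edist_dist]
  refine ENNReal.ofReal_le_ofReal ?_
  have h1 := mem_closedBall.mp hx
  have h2 := mem_closedBall.mp hy
  have h3 := dist_triangle_right x y c
  linarith

set_option maxHeartbeats 2000000 in
lemma key (A : Matrix (Fin 2) (Fin 2) ℤ) (l₁ l₂ : ℝ)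
    (hsum : l₁ + l₂ = (A.trace : ℝ)) (hprod : l₁ * l₂ = (A.det : ℝ))
    (h1 : |l₁| < 1) (h2 : 1 < |l₂|)
    (τ : ℝ) (hτ : 0 < τ) (s : ℝ) (hs : Real.log |l₂| / τ < s)
    (R : ℝ) (hR : 0 ≤ R) :
    μH[s] (recSet A τ ∩ Metric.closedBall 0 R) = 0 := by
  classical
  set L := Real.log |l₂| with hLdef
  have hl2pos : (0:ℝ) < |l₂| := lt_trans one_pos h2
  have hL : 0 < L := Real.log_pos h2
  have hs0 : 0 < s := lt_trans (div_pos hL hτ) hs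
  -- matrices
  set M : Matrix (Fin 2) (Fin 2) ℝ := A.map (Int.cast : ℤ → ℝ) with hMdef
  have hMn : ∀ n : ℕ, (A ^ n).map (Int.cast : ℤ → ℝ) = M ^ n := by
    intro n
    have h := map_pow ((Int.castRingHom ℝ).mapMatrix) A n
    simpa [RingHom.mapMatrix_apply] using h
  have hMA : ∀ i j, M i j = (A i j : ℝ) := fun i j => rfl
  have htr : M.trace = l₁ + l₂ := by
    have h : (A.trace : ℝ) = (A 0 0 : ℝ) + (A 1 1 : ℝ) := by
      rw [Matrix.trace_fin_two]; push_cast; ring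
    rw [hsum, h, Matrix.trace_fin_two, hMA, hMA]
  have hdet : M.det = l₁ * l₂ := by
    have h : (A.det : ℝ) = (A 0 0 : ℝ) * A 1 1 - A 0 1 * A 1 0 := by
      rw [Matrix.det_fin_two]; push_cast; ring
    rw [hprod, h, Matrix.det_fin_two, hMA, hMA, hMA, hMA]
  have hab : l₂ - l₁ ≠ 0 := by
    intro h
    rw [sub_eq_zero] at h
    rw [h] at h2
    linarith
  have habspos : 0 < |l₂ - l₁| := abs_pos.mpr hab
  set p : ℕ → ℝ := fun n => (l₂^n - l₁^n)/(l₂-l₁) with hpdef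
  set q : ℕ → ℝ := fun n => (l₂*l₁^n - l₁*l₂^n)/(l₂-l₁) with hqdef
  have hpow : ∀ n, M^n = p n • M + q n • 1 := fun n => pow_formula M l₁ l₂ hab htr hdet n
  have habs1 : ∀ n : ℕ, |l₁|^n ≤ 1 := fun n => pow_le_one₀ (abs_nonneg _) h1.le
  have hbl : ∀ n : ℕ, 1 ≤ |l₂|^n := fun n => one_le_pow₀ h2.le
  have hpb : ∀ n, |p n| ≤ 2 * |l₂|^n / |l₂ - l₁| := by
    intro n
    have hnum : |l₂^n - l₁^n| ≤ 2 * |l₂|^n := by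
      have h := abs_sub_le' (l₂^n) (l₁^n)
      rw [abs_pow, abs_pow] at h
      nlinarith [habs1 n, hbl n]
    rw [hpdef]
    simp only []
    rw [abs_div]
    gcongr
  have hqb : ∀ n, |q n| ≤ 2 * |l₂| * |l₂|^n / |l₂ - l₁| := by
    intro n
    have hnum : |l₂*l₁^n - l₁*l₂^n| ≤ 2 * |l₂| * |l₂|^n := by
      have h := abs_sub_le' (l₂*l₁^n) (l₁*l₂^n)
      rw [abs_mul, abs_mul, abs_pow, abs_pow] at h
      nlinarith [habs1 n, hbl n, abs_nonneg l₁, abs_nonneg l₂, h1, h2]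
    rw [hqdef]
    simp only []
    rw [abs_div]
    gcongr
  -- entry bounds
  set K : ℝ := (∑ i : Fin 2, ∑ j : Fin 2, |M i j|) + 1 with hKdef
  have hK : ∀ i j, |M i j| ≤ K := by
    intro i j
    have e1 : |M i j| ≤ ∑ j' : Fin 2, |M i j'| :=
      Finset.single_le_sum (f := fun j' => |M i j'|) (fun _ _ => abs_nonneg _) (Finset.mem_univ j)
    have e2 : (∑ j' : Fin 2, |M i j'|) ≤ ∑ i' : Fin 2, ∑ j' : Fin 2, |M i' j'| :=
      Finset.single_le_sum (f := fun i' => ∑ j' : Fin 2, |M i' j'|)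
        (fun _ _ => Finset.sum_nonneg fun _ _ => abs_nonneg _) (Finset.mem_univ i)
    rw [hKdef]
    linarith
  have hK1 : 1 ≤ K := by
    rw [hKdef]
    have : (0:ℝ) ≤ ∑ i : Fin 2, ∑ j : Fin 2, |M i j| :=
      Finset.sum_nonneg fun _ _ => Finset.sum_nonneg fun _ _ => abs_nonneg _
    linarith
  set c₂ : ℝ := (2*K + 2*|l₂|) / |l₂ - l₁| with hc₂def
  have hc₂pos : 0 < c₂ := by
    rw [hc₂def]
    apply div_pos (by linarith) habspos
  have hone : ∀ i j : Fin 2, |(1 : Matrix (Fin 2) (Fin 2) ℝ) i j| ≤ 1 := by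
    intro i j
    rw [Matrix.one_apply]
    split <;> simp
  have hEntry : ∀ (n : ℕ) (i j : Fin 2), |(M^n) i j| ≤ c₂ * |l₂|^n := by
    intro n i j
    rw [hpow n]
    have e0 : (p n • M + q n • (1 : Matrix (Fin 2) (Fin 2) ℝ)) i j
        = p n * M i j + q n * (1 : Matrix (Fin 2) (Fin 2) ℝ) i j := by
      simp [Matrix.add_apply]
    rw [e0]
    have e1 : |p n * M i j| ≤ (2 * |l₂|^n / |l₂ - l₁|) * K := by
      rw [abs_mul]
      exact mul_le_mul (hpb n) (hK i j) (abs_nonneg _) (by positivity)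
    have e2 : |q n * (1 : Matrix (Fin 2) (Fin 2) ℝ) i j| ≤ 2 * |l₂| * |l₂|^n / |l₂ - l₁| := by
      rw [abs_mul]
      calc |q n| * |(1 : Matrix (Fin 2) (Fin 2) ℝ) i j| ≤ |q n| * 1 :=
            mul_le_mul_of_nonneg_left (hone i j) (abs_nonneg _)
        _ = |q n| := mul_one _
        _ ≤ 2 * |l₂| * |l₂|^n / |l₂ - l₁| := hqb n
    have e3 : (2 * |l₂|^n / |l₂ - l₁|) * K + 2 * |l₂| * |l₂|^n / |l₂ - l₁| = c₂ * |l₂|^n := by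
      rw [hc₂def]
      field_simp
    calc |p n * M i j + q n * (1 : Matrix (Fin 2) (Fin 2) ℝ) i j|
        ≤ |p n * M i j| + |q n * (1 : Matrix (Fin 2) (Fin 2) ℝ) i j| := abs_add_le _ _
      _ ≤ (2 * |l₂|^n / |l₂ - l₁|) * K + 2 * |l₂| * |l₂|^n / |l₂ - l₁| := add_le_add e1 e2
      _ = c₂ * |l₂|^n := e3
  have hNentry : ∀ (n : ℕ) (i j : Fin 2), |(M^n - 1) i j| ≤ (c₂ + 1) * |l₂|^n := by
    intro n i j
    have e0 : (M^n - 1) i j = (M^n) i j - (1 : Matrix (Fin 2) (Fin 2) ℝ) i j := rfl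
    rw [e0]
    have h := abs_sub_le' ((M^n) i j) ((1 : Matrix (Fin 2) (Fin 2) ℝ) i j)
    have := hEntry n i j
    have := hone i j
    have := hbl n
    nlinarith
  -- determinant of M^n - 1
  have hdetN : ∀ n : ℕ, (M^n - 1).det = (l₁^n - 1) * (l₂^n - 1) := by
    intro n
    have e1 : p n * l₁ + q n = l₁^n := by
      rw [hpdef, hqdef]
      simp only []
      field_simp
      ring
    have e2 : p n * l₂ + q n = l₂^n := by
      rw [hpdef, hqdef]
      simp only []
      field_simp
      ring
    have e3 : M^n - 1 = p n • M + (q n - 1) • (1 : Matrix (Fin 2) (Fin 2) ℝ) := by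
      rw [hpow n]
      module
    rw [e3, det_smul_add_smul_one, hdet, htr]
    linear_combination (p n * l₁ + q n - 1) * e2 + (l₂^n - 1) * e1
  set δ0 : ℝ := (1 - |l₁|) * (1 - |l₂|⁻¹) with hδ0def
  have hinvl2 : |l₂|⁻¹ < 1 := by
    rw [inv_lt_one_iff₀]
    right; exact h2
  have hδ0 : 0 < δ0 := by
    rw [hδ0def]
    have h3 : 0 < 1 - |l₁| := by linarith
    have h4 : 0 < 1 - |l₂|⁻¹ := by linarith
    positivity
  have hdlow : ∀ n : ℕ, 1 ≤ n → δ0 * |l₂|^n ≤ |(M^n - 1).det| := by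
    intro n hn
    rw [hdetN, abs_mul]
    have f1 : 1 - |l₁| ≤ |l₁^n - 1| := by
      have h3 : |l₁|^n ≤ |l₁| := by
        calc |l₁|^n ≤ |l₁|^1 := pow_le_pow_of_le_one (abs_nonneg _) h1.le hn
          _ = |l₁| := pow_one _
      have h4 := abs_sub_abs_le_abs_sub (1:ℝ) (l₁^n)
      rw [abs_one, abs_sub_comm, abs_pow] at h4
      linarith
    have f2 : (1 - |l₂|⁻¹) * |l₂|^n ≤ |l₂^n - 1| := by
      have h3 : |l₂| ≤ |l₂|^n := le_self_pow₀ h2.le (by omega)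
      have h4 := abs_sub_abs_le_abs_sub (l₂^n) (1:ℝ)
      rw [abs_one, abs_pow] at h4
      have h5 : (1 - |l₂|⁻¹) * |l₂|^n = |l₂|^n - |l₂|^n * |l₂|⁻¹ := by ring
      have h6 : |l₂|^n * |l₂|⁻¹ ≥ 1 := by
        rw [ge_iff_le, ← div_eq_mul_inv, le_div_iff₀ hl2pos]
        linarith
      linarith
    calc δ0 * |l₂|^n = (1 - |l₁|) * ((1 - |l₂|⁻¹) * |l₂|^n) := by rw [hδ0def]; ring
      _ ≤ |l₁^n - 1| * |l₂^n - 1| := by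
          apply mul_le_mul f1 f2 ?_ (abs_nonneg _)
          have h3 : 0 ≤ 1 - |l₂|⁻¹ := by linarith
          positivity
  have hdup : ∀ n : ℕ, |(M^n - 1).det| ≤ 4 * |l₂|^n := by
    intro n
    rw [hdetN, abs_mul]
    have f1 : |l₁^n - 1| ≤ 2 := by
      have h := abs_sub_le' (l₁^n) 1
      rw [abs_pow, abs_one] at h
      have := habs1 n
      linarith
    have f2 : |l₂^n - 1| ≤ 2 * |l₂|^n := by
      have h := abs_sub_le' (l₂^n) 1
      rw [abs_pow, abs_one] at h
      have := hbl n
      linarith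
    have h5 : 0 ≤ |l₂^n - 1| := abs_nonneg _
    nlinarith
  have hdet_ne : ∀ n : ℕ, 1 ≤ n → (M^n - 1).det ≠ 0 := by
    intro n hn
    have h3 := hdlow n hn
    have h4 : 0 < δ0 * |l₂|^n := by positivity
    intro h5
    rw [h5, abs_zero] at h3
    linarith
  -- inverse matrix
  set Pm : ℕ → Matrix (Fin 2) (Fin 2) ℝ := fun n => ((M^n - 1).det)⁻¹ • (M^n - 1).adjugate
    with hPmdef
  have hPN : ∀ n : ℕ, 1 ≤ n → Pm n * (M^n - 1) = 1 := by
    intro n hn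
    rw [hPmdef]
    simp only []
    rw [Matrix.smul_mul, Matrix.adjugate_mul, smul_smul,
      inv_mul_cancel₀ (hdet_ne n hn), one_smul]
  set c₃ : ℝ := (c₂ + 2) / δ0 with hc₃def
  have hc₃pos : 0 < c₃ := div_pos (by linarith) hδ0
  have hPm_entry : ∀ n : ℕ, 1 ≤ n → ∀ i j, |Pm n i j| ≤ c₃ := by
    intro n hn i j
    have hadj : |(M^n - 1).adjugate i j| ≤ (c₂ + 1) * |l₂|^n := by
      rw [Matrix.adjugate_fin_two]
      have hdiag : ∀ i' j' : Fin 2, |(M^n) i' j' - 1| ≤ (c₂+1)*|l₂|^n := by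
        intro i' j'
        have ha := abs_sub_le' ((M^n) i' j') 1
        rw [(abs_one : |(1:ℝ)| = 1)] at ha
        have hb := hEntry n i' j'
        have hc := hbl n
        linarith
      have hoff : ∀ i' j' : Fin 2, |(M^n) i' j'| ≤ (c₂+1)*|l₂|^n := by
        intro i' j'
        have hb := hEntry n i' j'
        have hc := hbl n
        nlinarith [hc₂pos.le]
      fin_cases i <;> fin_cases j <;> simp [abs_neg] <;>
        first
        | exact hdiag _ _
        | exact hoff _ _
    have e0 : Pm n i j = ((M^n - 1).det)⁻¹ * (M^n - 1).adjugate i j := by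
      rw [hPmdef]
      simp [Matrix.smul_apply]
    rw [e0, abs_mul, abs_inv]
    have hd1 : δ0 * |l₂|^n ≤ |(M^n - 1).det| := hdlow n hn
    have hd2 : 0 < δ0 * |l₂|^n := by positivity
    have hinv2 : |(M^n - 1).det|⁻¹ ≤ (δ0 * |l₂|^n)⁻¹ := by
      apply inv_anti₀ hd2 hd1
    calc |(M^n - 1).det|⁻¹ * |(M^n - 1).adjugate i j|
        ≤ (δ0 * |l₂|^n)⁻¹ * ((c₂ + 1) * |l₂|^n) :=
          mul_le_mul hinv2 hadj (abs_nonneg _) (by positivity)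
      _ = (c₂ + 1) / δ0 := by
          have hpow_ne : (|l₂|:ℝ)^n ≠ 0 := by positivity
          rw [mul_inv]
          field_simp
      _ ≤ c₃ := by
          rw [hc₃def]
          gcongr
          linarith
  set c₄ : ℝ := 4 * c₃ with hc₄def
  have hc₄pos : 0 < c₄ := by rw [hc₄def]; linarith
  have hPop : ∀ n : ℕ, 1 ≤ n → ∀ y : E2, ‖Matrix.toEuclideanLin (Pm n) y‖ ≤ c₄ * ‖y‖ := by
    intro n hn y
    have h := norm_toEuc_le (hPm_entry n hn) y
    rw [hc₄def]
    linarith [h]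
  have hinv : ∀ n : ℕ, 1 ≤ n → ∀ x : E2,
      Matrix.toEuclideanLin (Pm n) (Matrix.toEuclideanLin (M^n - 1) x) = x := by
    intro n hn x
    rw [← toEuc_mul, hPN n hn, toEuc_one]
  -- the radii
  set r : ℕ → ℝ := fun n => Real.exp (-(n:ℝ)*τ) with hrdef
  have hrpos : ∀ n, 0 < r n := fun n => Real.exp_pos _
  have hr1 : ∀ n, r n ≤ 1 := by
    intro n
    rw [hrdef]
    simp only []
    rw [Real.exp_le_one_iff]
    have : (0:ℝ) ≤ (n:ℝ) * τ := by positivity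
    linarith
  have hrmono : ∀ m n : ℕ, m ≤ n → r n ≤ r m := by
    intro m n hmn
    rw [hrdef]
    simp only []
    rw [Real.exp_le_exp]
    have : (m:ℝ) * τ ≤ (n:ℝ) * τ :=
      mul_le_mul_of_nonneg_right (by exact_mod_cast hmn) hτ.le
    linarith
  set cond : ℕ → (Fin 2 → ℤ) → Prop := fun n z =>
    ∃ x : E2, ‖x‖ ≤ R ∧ ‖Matrix.toEuclideanLin (M^n - 1) x - intVec z‖ < r n with hconddef
  set ctr : ℕ → (Fin 2 → ℤ) → E2 := fun n z => Matrix.toEuclideanLin (Pm n) (intVec z)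
    with hctrdef
  set t : ℕ → ℕ × (Fin 2 → ℤ) → Set E2 := fun N i =>
    if cond (N+1+i.1) i.2 then Metric.closedBall (ctr (N+1+i.1) i.2) (c₄ * r (N+1+i.1)) else ∅
    with htdef
  -- apply the covering lemma
  have hr0 : Tendsto (fun N : ℕ => ENNReal.ofReal (2*c₄*r N)) atTop (nhds 0) := by
    have h1' : Tendsto (fun N : ℕ => r N) atTop (nhds 0) := by
      have he : ∀ N : ℕ, r N = Real.exp (-τ) ^ N := by
        intro N
        rw [hrdef]
        simp only []
        rw [← Real.exp_nat_mul]
        congr 1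
        ring
      rw [funext he]
      exact tendsto_pow_atTop_nhds_zero_of_lt_one (Real.exp_pos _).le
        (Real.exp_lt_one_iff.mpr (by linarith))
    have h2' : Tendsto (fun N : ℕ => 2*c₄*r N) atTop (nhds 0) := by
      have := h1'.const_mul (2*c₄)
      simpa using this
    have h3' := (ENNReal.continuous_ofReal.tendsto 0).comp h2'
    simpa [Function.comp_def] using h3'
  have ht : ∀ᶠ N in atTop, ∀ i : ℕ × (Fin 2 → ℤ),
      EMetric.diam (t N i) ≤ ENNReal.ofReal (2*c₄*r N) := by
    refine Eventually.of_forall fun N i => ?_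
    rw [htdef]
    simp only []
    split
    · refine ediam_closedBall_le (by positivity) ?_
      have := hrmono N (N+1+i.1) (by omega)
      nlinarith
    · simp [EMetric.diam, Metric.ediam_empty]
  have hst : ∀ᶠ N in atTop, recSet A τ ∩ Metric.closedBall 0 R ⊆ ⋃ i, t N i := by
    refine Eventually.of_forall fun N x hx => ?_
    obtain ⟨hx1, hx2⟩ := hx
    obtain ⟨n, hn, z, hz⟩ := frequently_atTop.mp hx1 (N+1)
    have hn1 : 1 ≤ n := by omega
    rw [hMn n] at hz
    have hz' : ‖Matrix.toEuclideanLin (M^n - 1) x - intVec z‖ < r n := by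
      rw [toEuc_sub_one]
      exact hz
    have hcond : cond n z := ⟨x, mem_closedBall_zero_iff.mp hx2, hz'⟩
    refine Set.mem_iUnion.mpr ⟨(n - (N+1), z), ?_⟩
    rw [htdef]
    simp only []
    have hidx : N+1+(n-(N+1)) = n := by omega
    rw [hidx, if_pos hcond]
    have hxc : x - ctr n z
        = Matrix.toEuclideanLin (Pm n) (Matrix.toEuclideanLin (M^n - 1) x - intVec z) := by
      rw [hctrdef]
      simp only []
      rw [map_sub, hinv n hn1]
    refine mem_closedBall.mpr ?_
    rw [dist_eq_norm, hxc]
    calc ‖Matrix.toEuclideanLin (Pm n) (Matrix.toEuclideanLin (M^n - 1) x - intVec z)‖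
        ≤ c₄ * ‖Matrix.toEuclideanLin (M^n - 1) x - intVec z‖ := hPop n hn1 _
      _ ≤ c₄ * r n := mul_le_mul_of_nonneg_left hz'.le hc₄pos.le
  have hmain := MeasureTheory.Measure.hausdorffMeasure_le_liminf_tsum s
    (recSet A τ ∩ Metric.closedBall 0 R) (fun N => ENNReal.ofReal (2*c₄*r N)) hr0 t ht hst
  -- now bound the sums
  set θ : ℝ := Real.exp (L - τ*s) with hθdef
  have hθ0 : 0 ≤ θ := (Real.exp_pos _).le
  have hθ1 : θ < 1 := by
    rw [hθdef, Real.exp_lt_one_iff]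
    rw [div_lt_iff₀ hτ] at hs
    nlinarith
  have hθe : ENNReal.ofReal θ < 1 := ENNReal.ofReal_lt_one.mpr hθ1
  set v : ENNReal := volume (Metric.ball (0:E2) (1/2)) with hvdef
  have hv0 : v ≠ 0 := by
    rw [hvdef]
    exact (measure_ball_pos volume _ (by norm_num)).ne'
  have hvt : v ≠ ⊤ := by
    rw [hvdef]
    exact (measure_ball_lt_top).ne
  set V : ENNReal := volume (Metric.closedBall (0:E2) (R + 2*c₄)) with hVdef
  have hVt : V ≠ ⊤ := measure_closedBall_lt_top.ne
  set Cc : ℝ := (2*c₄)^s * 4 with hCcdef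
  have hCc0 : 0 ≤ Cc := by
    rw [hCcdef]
    positivity
  -- counting lemma
  have hcount : ∀ n : ℕ, 1 ≤ n →
      (∑' z : Fin 2 → ℤ, if cond n z then (1:ENNReal) else 0)
        * (ENNReal.ofReal |(M^n - 1).det|⁻¹ * v) ≤ V := by
    intro n hn
    set T : (Fin 2 → ℤ) → Set E2 := fun z =>
      if cond n z then (Matrix.toEuclideanLin (M^n - 1)) ⁻¹' (Metric.ball (intVec z) (1/2))
      else ∅ with hTdef
    have hcont : Continuous (Matrix.toEuclideanLin (M^n - 1) : E2 → E2) :=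
      LinearMap.continuous_of_finiteDimensional _
    have hTmeas : ∀ z, MeasurableSet (T z) := by
      intro z
      rw [hTdef]
      simp only []
      split
      · exact measurableSet_ball.preimage hcont.measurable
      · exact MeasurableSet.empty
    have hTdisj : Pairwise (Function.onFun Disjoint T) := by
      intro z z' hzz
      have hballs : Disjoint (Metric.ball (intVec z) (1/2)) (Metric.ball (intVec z') (1/2)) := by
        apply Metric.ball_disjoint_ball
        have := intVec_dist hzz
        linarith
      rw [Function.onFun, hTdef]
      simp only []
      split <;> split
      · exact Disjoint.preimage _ hballs
      · exact Set.disjoint_empty _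
      · exact Set.empty_disjoint _
      · exact Set.disjoint_empty _
    have hTsub : ∀ z, T z ⊆ Metric.closedBall 0 (R + 2*c₄) := by
      intro z y hy
      rw [hTdef] at hy
      simp only [] at hy
      by_cases hc : cond n z
      · rw [if_pos hc] at hy
        obtain ⟨x, hxR, hxz⟩ := hc
        have hy' : Matrix.toEuclideanLin (M^n - 1) y ∈ Metric.ball (intVec z) (1/2) :=
          Set.mem_preimage.mp hy
        have h5 : ‖Matrix.toEuclideanLin (M^n - 1) y - intVec z‖ < 1/2 := by
          have h5a := Metric.mem_ball.mp hy'
          rwa [dist_eq_norm] at h5a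
        have h6 : Matrix.toEuclideanLin (M^n - 1) (y - x)
            = (Matrix.toEuclideanLin (M^n - 1) y - intVec z)
              - (Matrix.toEuclideanLin (M^n - 1) x - intVec z) := by
          rw [map_sub]
          abel
        have h7 : ‖y - x‖ ≤ c₄ * (3/2) := by
          have e1 : y - x = Matrix.toEuclideanLin (Pm n)
              (Matrix.toEuclideanLin (M^n - 1) (y - x)) := (hinv n hn _).symm
          rw [e1, h6]
          calc ‖Matrix.toEuclideanLin (Pm n) _‖
              ≤ c₄ * ‖(Matrix.toEuclideanLin (M^n - 1) y - intVec z)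
                - (Matrix.toEuclideanLin (M^n - 1) x - intVec z)‖ := hPop n hn _
            _ ≤ c₄ * (3/2) := by
                apply mul_le_mul_of_nonneg_left ?_ hc₄pos.le
                have h8 := norm_sub_le (Matrix.toEuclideanLin (M^n - 1) y - intVec z)
                  (Matrix.toEuclideanLin (M^n - 1) x - intVec z)
                have h9 := hr1 n
                linarith
        rw [mem_closedBall_zero_iff]
        calc ‖y‖ = ‖(y - x) + x‖ := by rw [sub_add_cancel]
          _ ≤ ‖y - x‖ + ‖x‖ := norm_add_le _ _
          _ ≤ R + 2*c₄ := by nlinarith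
      · rw [if_neg hc] at hy
        exact absurd hy (Set.notMem_empty y)
    have hTvol : ∀ z, volume (T z)
        = (if cond n z then (1:ENNReal) else 0) * (ENNReal.ofReal |(M^n - 1).det|⁻¹ * v) := by
      intro z
      rw [hTdef]
      simp only []
      split
      · rw [one_mul]
        have hdet' : LinearMap.det (Matrix.toEuclideanLin (M^n - 1)) ≠ 0 := by
          rw [det_toEuc]
          exact hdet_ne n hn
        rw [MeasureTheory.Measure.addHaar_preimage_linearMap volume hdet', det_toEuc,
          Measure.addHaar_ball_center, abs_inv]
      · simp
    have e1 : (∑' z : Fin 2 → ℤ, if cond n z then (1:ENNReal) else 0)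
        * (ENNReal.ofReal |(M^n - 1).det|⁻¹ * v) = ∑' z : Fin 2 → ℤ, volume (T z) := by
      rw [← ENNReal.tsum_mul_right]
      exact tsum_congr fun z => (hTvol z).symm
    rw [e1, ← measure_iUnion hTdisj hTmeas]
    exact measure_mono (Set.iUnion_subset hTsub)
  -- per-N estimate
  set CC : ENNReal := V * v⁻¹ * ENNReal.ofReal Cc * (1 - ENNReal.ofReal θ)⁻¹ with hCCdef
  have hsumN : ∀ N : ℕ,
      (∑' i : ℕ × (Fin 2 → ℤ), EMetric.diam (t N i) ^ s) ≤ CC * (ENNReal.ofReal θ)^(N+1) := by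
    intro N
    have hpt : ∀ (m : ℕ) (z : Fin 2 → ℤ),
        EMetric.diam (t N (m, z)) ^ s
          ≤ (if cond (N+1+m) z then (1:ENNReal) else 0)
              * ENNReal.ofReal ((2*c₄*r (N+1+m))^s) := by
      intro m z
      have ht1 : t N (m, z) = if cond (N+1+m) z then
          Metric.closedBall (ctr (N+1+m) z) (c₄ * r (N+1+m)) else ∅ := rfl
      rw [ht1]
      by_cases h : cond (N+1+m) z
      · rw [if_pos h, if_pos h, one_mul]
        have hd : EMetric.diam (Metric.closedBall (ctr (N+1+m) z) (c₄ * r (N+1+m)))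
            ≤ ENNReal.ofReal (2*c₄*r (N+1+m)) :=
          ediam_closedBall_le (by positivity) (le_of_eq (by ring))
        calc EMetric.diam (Metric.closedBall (ctr (N+1+m) z) (c₄ * r (N+1+m))) ^ s
            ≤ (ENNReal.ofReal (2*c₄*r (N+1+m))) ^ s := ENNReal.rpow_le_rpow hd hs0.le
          _ = ENNReal.ofReal ((2*c₄*r (N+1+m))^s) :=
              ENNReal.ofReal_rpow_of_nonneg (by positivity) hs0.le
      · rw [if_neg h, if_neg h, zero_mul, EMetric.diam, Metric.ediam_empty,
          ENNReal.zero_rpow_of_pos hs0]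
    have hterm : ∀ m : ℕ,
        (∑' z : Fin 2 → ℤ, if cond (N+1+m) z then (1:ENNReal) else 0)
            * ENNReal.ofReal ((2*c₄*r (N+1+m))^s)
          ≤ V * v⁻¹ * ENNReal.ofReal Cc * (ENNReal.ofReal θ)^(N+1+m) := by
      intro m
      set n : ℕ := N+1+m with hn_def
      have hn : 1 ≤ n := by omega
      have hdpos : 0 < |(M^n - 1).det| := by
        have h4 : 0 < δ0 * |l₂|^n := by positivity
        linarith [hdlow n hn]
      have hne0 : ENNReal.ofReal |(M^n - 1).det|⁻¹ * v ≠ 0 :=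
        mul_ne_zero (ENNReal.ofReal_pos.mpr (inv_pos.mpr hdpos)).ne' hv0
      have hneT : ENNReal.ofReal |(M^n - 1).det|⁻¹ * v ≠ ⊤ :=
        ENNReal.mul_ne_top ENNReal.ofReal_ne_top hvt
      have hcnt : (∑' z : Fin 2 → ℤ, if cond n z then (1:ENNReal) else 0)
          ≤ V * (ENNReal.ofReal |(M^n - 1).det|⁻¹ * v)⁻¹ := by
        have h9 := (ENNReal.le_div_iff_mul_le (Or.inl hne0) (Or.inl hneT)).mpr (hcount n hn)
        rwa [div_eq_mul_inv] at h9
      have hainv : (ENNReal.ofReal |(M^n - 1).det|⁻¹ * v)⁻¹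
          = ENNReal.ofReal |(M^n - 1).det| * v⁻¹ := by
        rw [ENNReal.mul_inv (Or.inl (ENNReal.ofReal_pos.mpr (inv_pos.mpr hdpos)).ne')
          (Or.inl ENNReal.ofReal_ne_top)]
        congr 1
        rw [ENNReal.ofReal_inv_of_pos hdpos, inv_inv]
      have hwd : ENNReal.ofReal ((2*c₄*r n)^s) * ENNReal.ofReal |(M^n - 1).det|
          ≤ ENNReal.ofReal Cc * (ENNReal.ofReal θ)^n := by
        rw [← ENNReal.ofReal_pow hθ0, ← ENNReal.ofReal_mul (by positivity),
          ← ENNReal.ofReal_mul hCc0]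
        apply ENNReal.ofReal_le_ofReal
        have hkey : (2*c₄*r n)^s * (4 * |l₂|^n) = Cc * θ^n := by
          rw [Real.mul_rpow (by positivity) (hrpos n).le]
          have e1 : r n ^ s = Real.exp (-(n:ℝ)*τ*s) := by
            rw [hrdef]
            simp only []
            rw [← Real.exp_mul]
          have e2 : |l₂|^n = Real.exp ((n:ℝ)*L) := by
            rw [Real.exp_nat_mul, hLdef, Real.exp_log hl2pos]
          have e3 : θ^n = Real.exp ((n:ℝ)*(L - τ*s)) := by
            rw [Real.exp_nat_mul, hθdef]
          rw [e1, e2, e3, hCcdef]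
          rw [show (n:ℝ)*(L - τ*s) = (n:ℝ)*L + (-(n:ℝ)*τ*s) by ring, Real.exp_add]
          ring
        calc (2*c₄*r n)^s * |(M^n - 1).det| ≤ (2*c₄*r n)^s * (4 * |l₂|^n) :=
              mul_le_mul_of_nonneg_left (hdup n) (by positivity)
          _ = Cc * θ^n := hkey
      calc (∑' z : Fin 2 → ℤ, if cond n z then (1:ENNReal) else 0)
            * ENNReal.ofReal ((2*c₄*r n)^s)
          ≤ (V * (ENNReal.ofReal |(M^n - 1).det|⁻¹ * v)⁻¹)
              * ENNReal.ofReal ((2*c₄*r n)^s) := mul_le_mul_left hcnt _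
        _ = V * v⁻¹ * (ENNReal.ofReal ((2*c₄*r n)^s) * ENNReal.ofReal |(M^n - 1).det|) := by
            rw [hainv]; ring
        _ ≤ V * v⁻¹ * (ENNReal.ofReal Cc * (ENNReal.ofReal θ)^n) := mul_le_mul_right hwd _
        _ = V * v⁻¹ * ENNReal.ofReal Cc * (ENNReal.ofReal θ)^n := by ring
    calc (∑' i : ℕ × (Fin 2 → ℤ), EMetric.diam (t N i) ^ s)
        = ∑' (m : ℕ) (z : Fin 2 → ℤ), EMetric.diam (t N (m, z)) ^ s := by
          rw [← ENNReal.tsum_prod]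
      _ ≤ ∑' (m : ℕ) (z : Fin 2 → ℤ), (if cond (N+1+m) z then (1:ENNReal) else 0)
            * ENNReal.ofReal ((2*c₄*r (N+1+m))^s) :=
          ENNReal.tsum_le_tsum fun m => ENNReal.tsum_le_tsum fun z => hpt m z
      _ = ∑' (m : ℕ), (∑' z : Fin 2 → ℤ, if cond (N+1+m) z then (1:ENNReal) else 0)
            * ENNReal.ofReal ((2*c₄*r (N+1+m))^s) :=
          tsum_congr fun m => ENNReal.tsum_mul_right
      _ ≤ ∑' (m : ℕ), V * v⁻¹ * ENNReal.ofReal Cc * (ENNReal.ofReal θ)^(N+1+m) :=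
          ENNReal.tsum_le_tsum hterm
      _ = V * v⁻¹ * ENNReal.ofReal Cc * (ENNReal.ofReal θ)^(N+1)
            * ∑' (m : ℕ), (ENNReal.ofReal θ)^m := by
          rw [← ENNReal.tsum_mul_left]
          exact tsum_congr fun m => by rw [pow_add]; ring
      _ = CC * (ENNReal.ofReal θ)^(N+1) := by
          rw [ENNReal.tsum_geometric, hCCdef]
          ring
  have hCCne : CC ≠ ⊤ := by
    rw [hCCdef]
    refine ENNReal.mul_ne_top (ENNReal.mul_ne_top (ENNReal.mul_ne_top hVt ?_)
      ENNReal.ofReal_ne_top) ?_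
    · exact ENNReal.inv_ne_top.mpr hv0
    · exact ENNReal.inv_ne_top.mpr (tsub_pos_of_lt hθe).ne'
  have hlim : Tendsto (fun N : ℕ => CC * (ENNReal.ofReal θ)^(N+1)) atTop (nhds 0) := by
    have h1' : Tendsto (fun N : ℕ => (ENNReal.ofReal θ)^(N+1)) atTop (nhds 0) :=
      (ENNReal.tendsto_pow_atTop_nhds_zero_of_lt_one hθe).comp (tendsto_add_atTop_nat 1)
    have h2' := ENNReal.Tendsto.const_mul h1' (Or.inr hCCne)
    simpa using h2'
  refine le_antisymm (hmain.trans ?_) zero_le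
  have h1' : liminf (fun N : ℕ => ∑' i : ℕ × (Fin 2 → ℤ), EMetric.diam (t N i) ^ s) atTop
      ≤ liminf (fun N : ℕ => CC * (ENNReal.ofReal θ)^(N+1)) atTop :=
    liminf_le_liminf (Eventually.of_forall hsumN)
  rw [hlim.liminf_eq] at h1'
  exact h1'





end RecAux

/-- If `s > log|λ₂|/τ` then the `s`-dimensional Hausdorff measure of `R_τ` is
zero; consequently `dim_H R_τ ≤ log|λ₂|/τ`. -/
theorem hausdorffMeasure_recSet_eq_zero (A : Matrix (Fin 2) (Fin 2) ℤ)
    (l₁ l₂ : ℝ)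
    (hsum : l₁ + l₂ = (A.trace : ℝ)) (hprod : l₁ * l₂ = (A.det : ℝ))
    (h0 : 0 < |l₁|) (h1 : |l₁| < 1) (h2 : 1 < |l₂|)
    (τ : ℝ) (hτ : 0 < τ) :
    (∀ s : ℝ, Real.log |l₂| / τ < s → μH[s] (recSet A τ) = 0) ∧
    dimH (recSet A τ) ≤ ENNReal.ofReal (Real.log |l₂| / τ) := by
  have main : ∀ s : ℝ, Real.log |l₂| / τ < s → μH[s] (recSet A τ) = 0 := by
    intro s hs
    have hcover : recSet A τ ⊆ ⋃ m : ℕ, recSet A τ ∩ Metric.closedBall 0 (m : ℝ) := by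
      intro x hx
      obtain ⟨m, hm⟩ := exists_nat_ge ‖x‖
      exact Set.mem_iUnion.mpr ⟨m, hx, mem_closedBall_zero_iff.mpr hm⟩
    refine measure_mono_null hcover (measure_iUnion_null fun m => ?_)
    exact RecAux.key A l₁ l₂ hsum hprod h1 h2 τ hτ s hs m (Nat.cast_nonneg m)
  refine ⟨main, ?_⟩
  refine dimH_le fun d' hd' => ?_
  by_contra hlt
  push_neg at hlt
  have h0' : 0 ≤ Real.log |l₂| / τ := div_nonneg (Real.log_pos h2).le hτ.le
  have hq : Real.log |l₂| / τ < (d' : ℝ) := by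
    rw [← ENNReal.ofReal_coe_nnreal] at hlt
    exact (ENNReal.ofReal_lt_ofReal_iff_of_nonneg h0').mp hlt
  rw [main d' hq] at hd'
  simp at hd'
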